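/- arXiv:2311.09771 — 3 statements merged into one kernel-verified Lean document; each statement's English description precedes it below -/
import Mathlib

section
/- Let c ∈ ℝ and n ≥ 1. If z₁, z₂ are roots of D_{2n}(z;c) = ∏_{j=1}^{2n}(z-(j-1)) + (-1)^n c with equal real parts and z₁ ≠ z₂, then z₂ is the complex conjugate of z₁. -/
open Finset

lemma key_mono (s : Finset ℕ) (hs : s.Nonempty) (a : ℕ → ℝ) (ha : ∀ j, 0 ≤ a j)
    (t1 t2 : ℝ) (ht1 : 0 ≤ t1) (h : t1 < t2) :
    ∏ j ∈ s, (a j + t1) < ∏ j ∈ s, (a j + t2) := by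
  have ht2 : 0 < t2 := lt_of_le_of_lt ht1 h
  by_cases hpos : ∀ j ∈ s, 0 < a j + t1
  · exact Finset.prod_lt_prod_of_nonempty hpos (fun j _ => by linarith) hs
  · push_neg at hpos
    obtain ⟨j, hj, hj0⟩ := hpos
    have hz : a j + t1 = 0 := le_antisymm hj0 (by have := ha j; linarith)
    rw [Finset.prod_eq_zero hj hz]
    exact Finset.prod_pos (fun i _ => by have := ha i; linarith)

lemma key_eq (s : Finset ℕ) (hs : s.Nonempty) (a : ℕ → ℝ) (ha : ∀ j, 0 ≤ a j)
    (t1 t2 : ℝ) (ht1 : 0 ≤ t1) (ht2 : 0 ≤ t2)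
    (h : ∏ j ∈ s, (a j + t1) = ∏ j ∈ s, (a j + t2)) : t1 = t2 := by
  rcases lt_trichotomy t1 t2 with h' | h' | h'
  · exact absurd h (ne_of_lt (key_mono s hs a ha t1 t2 ht1 h'))
  · exact h'
  · exact absurd h.symm (ne_of_lt (key_mono s hs a ha t2 t1 ht2 h'))

/-- If two distinct roots of `D_{2n}(·;c)` have the same real part, then they are
complex conjugates of each other. -/
theorem stmt6 (n : ℕ) (hn : 1 ≤ n) (c : ℝ) (z₁ z₂ : ℂ)
    (h1 : (∏ j ∈ range (2*n), (z₁ - j)) + (-1)^n * (c : ℂ) = 0)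
    (h2 : (∏ j ∈ range (2*n), (z₂ - j)) + (-1)^n * (c : ℂ) = 0)
    (hre : z₁.re = z₂.re) (hne : z₁ ≠ z₂) :
    z₂ = starRingEnd ℂ z₁ := by
  have hprod : (∏ j ∈ range (2*n), (z₁ - j)) = ∏ j ∈ range (2*n), (z₂ - j) := by
    have h := h1.trans h2.symm
    linear_combination h
  have hns : Complex.normSq (∏ j ∈ range (2*n), (z₁ - j))
      = Complex.normSq (∏ j ∈ range (2*n), (z₂ - j)) := by rw [hprod]
  rw [map_prod, map_prod] at hns
  set x := z₁.re with hx
  have hnorm : ∀ (z : ℂ) (j : ℕ), Complex.normSq (z - j)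
      = (z.re - j)^2 + z.im^2 := by
    intro z j
    simp [Complex.normSq_apply, Complex.sub_re, Complex.sub_im]
    ring
  have hns' : ∏ j ∈ range (2*n), ((x - j)^2 + z₁.im^2)
      = ∏ j ∈ range (2*n), ((x - j)^2 + z₂.im^2) := by
    calc ∏ j ∈ range (2*n), ((x - j)^2 + z₁.im^2)
        = ∏ j ∈ range (2*n), Complex.normSq (z₁ - j) := by
          refine Finset.prod_congr rfl fun j _ => ?_; rw [hnorm]
      _ = ∏ j ∈ range (2*n), Complex.normSq (z₂ - j) := hns
      _ = ∏ j ∈ range (2*n), ((x - j)^2 + z₂.im^2) := by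
          refine Finset.prod_congr rfl fun j _ => ?_; rw [hnorm, hre]
  have hsne : (range (2*n)).Nonempty := by
    refine Finset.nonempty_range_iff.mpr ?_
    omega
  have him2 : z₁.im^2 = z₂.im^2 :=
    key_eq _ hsne (fun j => (x - j)^2) (fun j => sq_nonneg _) _ _
      (sq_nonneg _) (sq_nonneg _) hns'
  have him : z₁.im = z₂.im ∨ z₁.im = -z₂.im := sq_eq_sq_iff_eq_or_eq_neg.mp him2
  rcases him with him | him
  · exact absurd (Complex.ext hre him) hne
  · apply Complex.ext
    · exact hre.symm.trans hx
    · simp [Complex.conj_im]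
      linarith
end

section
/- For every c ∈ ℝ and n ≥ 1, the polynomial D_{2n}(z;c) = ∏_{j=1}^{2n}(z-(j-1)) + (-1)^n c has no root of multiplicity greater than 2. -/
open Polynomial

/-- The derivative of `∏_{j<m} (X - j)` over `ℝ` is separable, for `m ≥ 2`. -/
lemma deriv_sep (m : ℕ) (hm : 2 ≤ m) :
    (derivative (∏ j ∈ Finset.range m, (X - C (j : ℝ)))).Separable := by
  set r : ℝ[X] := ∏ j ∈ Finset.range m, (X - C (j : ℝ)) with hr
  have hmonic : r.Monic := monic_prod_of_monic _ _ fun j _ => monic_X_sub_C _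
  have hdeg : r.natDegree = m := by
    rw [hr, natDegree_prod _ _ (fun j _ => X_sub_C_ne_zero _)]
    simp only [natDegree_X_sub_C]
    simp
  have hcoeff : (derivative r).coeff (m - 1) = (m : ℝ) := by
    rw [coeff_derivative]
    have h1 : m - 1 + 1 = m := by omega
    rw [h1]
    have : r.coeff m = 1 := by
      have := hmonic.coeff_natDegree
      rwa [hdeg] at this
    rw [this, one_mul]
    have h2 : ((m - 1 : ℕ) : ℝ) + 1 = ((m - 1 + 1 : ℕ) : ℝ) := by push_cast; ring
    rw [h2, h1]
  have hcne : (derivative r).coeff (m - 1) ≠ 0 := by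
    rw [hcoeff]
    exact_mod_cast Nat.cast_ne_zero.2 (by omega)
  have hdeg' : (derivative r).natDegree = m - 1 := by
    refine le_antisymm ?_ (le_natDegree_of_ne_zero hcne)
    have := natDegree_derivative_le r
    rwa [hdeg] at this
  have hne : derivative r ≠ 0 := fun h => hcne (by rw [h]; simp)
  -- roots of r at the integers 0,...,m-1
  have hroot : ∀ k : ℕ, k < m → r.eval (k : ℝ) = 0 := by
    intro k hk
    rw [hr, eval_prod]
    exact Finset.prod_eq_zero (Finset.mem_range.2 hk) (by simp)
  -- Rolle: a root of r' in each interval (k, k+1)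
  have hR : ∀ k : ℕ, k < m - 1 → ∃ x ∈ Set.Ioo (k : ℝ) (k + 1),
      (derivative r).eval x = 0 := by
    intro k hk
    have h1 : (k : ℝ) < (k : ℝ) + 1 := by linarith
    have hc : ContinuousOn (fun x => r.eval x) (Set.Icc (k : ℝ) (k + 1)) :=
      (Polynomial.continuous r).continuousOn
    have heq : r.eval (k : ℝ) = r.eval ((k : ℝ) + 1) := by
      rw [hroot k (by omega)]
      have := hroot (k + 1) (by omega)
      push_cast at this
      rw [this]
    obtain ⟨x, hx, hx0⟩ := exists_deriv_eq_zero h1 hc heq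
    exact ⟨x, hx, by rwa [Polynomial.deriv] at hx0⟩
  classical
  choose f hf1 hf2 using hR
  -- the chosen roots are distinct
  have hinj : ∀ k (hk : k < m - 1) l (hl : l < m - 1), f k hk = f l hl → k = l := by
    intro k hk l hl hfe
    by_contra hne'
    rcases Nat.lt_or_ge k l with h | h
    · have h1 := (hf1 k hk).2
      have h2 := (hf1 l hl).1
      have : (k : ℝ) + 1 ≤ l := by exact_mod_cast Nat.succ_le_of_lt h
      rw [hfe] at h1
      linarith
    · have h' : l < k := by omega
      have h1 := (hf1 l hl).2
      have h2 := (hf1 k hk).1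
      have : (l : ℝ) + 1 ≤ k := by exact_mod_cast Nat.succ_le_of_lt h'
      rw [← hfe] at h1
      linarith
  -- build a finset of m-1 distinct roots
  let s : Finset ℝ := Finset.univ.image (fun k : Fin (m - 1) => f k k.2)
  have hscard : s.card = m - 1 := by
    rw [Finset.card_image_of_injective _ ?_, Finset.card_univ, Fintype.card_fin]
    intro a b hab
    exact Fin.ext (hinj a a.2 b b.2 hab)
  have hsub : s ⊆ (derivative r).roots.toFinset := by
    intro x hx
    simp only [s, Finset.mem_image, Finset.mem_univ, true_and] at hx
    obtain ⟨k, rfl⟩ := hx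
    rw [Multiset.mem_toFinset, mem_roots hne]
    exact hf2 k k.2
  have hcard1 : m - 1 ≤ (derivative r).roots.toFinset.card :=
    hscard ▸ Finset.card_le_card hsub
  have hcard2 : (derivative r).roots.toFinset.card ≤ Multiset.card (derivative r).roots :=
    Multiset.toFinset_card_le _
  have hcard3 : Multiset.card (derivative r).roots ≤ m - 1 :=
    hdeg' ▸ (card_roots' (derivative r))
  have hcards : Multiset.card (derivative r).roots = m - 1 := le_antisymm hcard3
    (hcard1.trans hcard2)
  have hnodup : (derivative r).roots.Nodup := by
    rw [← Multiset.toFinset_card_eq_card_iff_nodup]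
    omega
  have hsplits : (derivative r).Splits := by
    rw [splits_iff_card_roots, hcards, hdeg']
  exact (nodup_roots_iff_of_splits hne hsplits).1 hnodup

/-- `D_{2n}(·;c) = ∏_{j=1}^{2n}(X-(j-1)) + (-1)^n c` has no root of multiplicity
greater than 2. -/
theorem stmt7 (n : ℕ) (hn : 1 ≤ n) (c : ℝ) (z : ℂ) :
    ((∏ j ∈ Finset.range (2*n), (X - C (j : ℂ))) + C ((-1)^n * (c : ℂ))).rootMultiplicity z
      ≤ 2 := by
  by_contra h
  push_neg at h
  set P : ℂ[X] := (∏ j ∈ Finset.range (2*n), (X - C (j : ℂ))) + C ((-1)^n * (c : ℂ)) with hP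
  have hmap : derivative P =
      Polynomial.map (algebraMap ℝ ℂ) (derivative (∏ j ∈ Finset.range (2*n), (X - C (j : ℝ)))) := by
    rw [hP, derivative_add, derivative_C, add_zero, ← derivative_map]
    congr 1
    rw [Polynomial.map_prod]
    refine Finset.prod_congr rfl fun j _ => ?_
    simp [Polynomial.map_sub, map_C]
  have hsep : (derivative P).Separable := by
    rw [hmap]
    exact (deriv_sep (2*n) (by omega)).map
  obtain ⟨a, b, hab⟩ := hsep
  -- z is a root of P' and P''
  have h3 : 3 ≤ P.rootMultiplicity z := h
  have h2 : 2 ≤ (derivative P).rootMultiplicity z := by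
    have := P.rootMultiplicity_sub_one_le_derivative_rootMultiplicity z
    omega
  have h1 : 1 ≤ (derivative (derivative P)).rootMultiplicity z := by
    have := (derivative P).rootMultiplicity_sub_one_le_derivative_rootMultiplicity z
    omega
  have hd2 : (X - C z)^2 ∣ derivative P :=
    (pow_dvd_pow _ h2).trans (pow_rootMultiplicity_dvd _ z)
  have hd1 : (X - C z) ∣ derivative P := (dvd_pow_self _ two_ne_zero).trans hd2
  have hd2' : (X - C z) ∣ derivative (derivative P) := by
    have := (pow_dvd_pow (X - C z) h1).trans (pow_rootMultiplicity_dvd (derivative (derivative P)) z)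
    simpa using this
  have e1 : (derivative P).eval z = 0 := dvd_iff_isRoot.mp hd1
  have e2 : (derivative (derivative P)).eval z = 0 := dvd_iff_isRoot.mp hd2'
  have := congrArg (eval z) hab
  simp [e1, e2] at this
end

section
/- If c ∈ ℝ with |c| < (4n-1)!!/2^{2n}, then the polynomial D_{2n}(z - 1/2; c) = ∏_{j=1}^{2n}(z - 1/2 - (j-1)) + (-1)^n c has no purely imaginary root z ∈ iℝ. -/
open Finset

lemma prod_half (m : ℕ) :
    ∏ j ∈ range m, ((j : ℝ) + 1/2) = (∏ j ∈ Icc 1 m, (2*(j : ℝ) - 1)) / 2^m := by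
  induction m with
  | zero => simp
  | succ k ih =>
    rw [Finset.prod_range_succ, ih, Finset.prod_Icc_succ_top (by omega)]
    push_cast
    field_simp
    ring

/-- If `|c| < (4n-1)!!/2^{2n}`, then `D_{2n}(z - 1/2; c)` has no purely imaginary root. -/
theorem stmt8 (n : ℕ) (hn : 1 ≤ n) (c : ℝ)
    (hc : |c| < (∏ j ∈ Icc 1 (2*n), (2*(j : ℝ) - 1)) / 2^(2*n)) (y : ℝ) :
    (∏ j ∈ range (2*n), ((Complex.I * y - 1/2) - j)) + (-1)^n * (c : ℂ) ≠ 0 := by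
  intro h
  have hprod : (∏ j ∈ range (2*n), ((Complex.I * y - 1/2) - j)) = -((-1)^n * (c : ℂ)) := by
    linear_combination h
  have habs : ‖∏ j ∈ range (2*n), ((Complex.I * y - 1/2) - j)‖ = |c| := by
    rw [hprod]
    simp [abs_mul]
  have hlb : ∀ j ∈ range (2*n), ((j : ℝ) + 1/2) ≤ ‖(Complex.I * y - 1/2) - j‖ := by
    intro j _
    have hre : ((Complex.I * y - 1/2) - j).re = -1/2 - j := by
      simp; norm_num
    have hj : (0:ℝ) ≤ (j:ℝ) := Nat.cast_nonneg j
    calc ((j : ℝ) + 1/2) = |((Complex.I * y - 1/2) - j).re| := by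
          rw [hre, abs_of_nonpos (by linarith)]; ring
      _ ≤ ‖(Complex.I * y - 1/2) - j‖ := Complex.abs_re_le_norm _
  have hge : (∏ j ∈ Icc 1 (2*n), (2*(j : ℝ) - 1)) / 2^(2*n)
      ≤ ‖∏ j ∈ range (2*n), ((Complex.I * y - 1/2) - j)‖ := by
    rw [← prod_half, norm_prod]
    exact Finset.prod_le_prod (fun j _ => by positivity) hlb
  linarith
end
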